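/- Let M be a smooth (C^∞), Hausdorff, second-countable finite-dimensional manifold, d ≥ 1, and let {V_x}_{x∈M} be a family of linear subspaces of ℝ^d. Then the following are equivalent: (i) for every x̄ ∈ M and v̄ ∈ V_{x̄} there exist an open neighbourhood U of x̄ and a continuous map v : U → ℝ^d with v(x̄) = v̄ and v(x) ∈ V_x for all x ∈ U; (iii) for every x̄ ∈ M there exist an open neighbourhood U of x̄, a natural number k, and a continuous map A : U → L(ℝ^k, ℝ^d) (with the operator norm topology) such that V_x = range A(x) for every x ∈ U. -/

import Mathlib

open scoped Manifold
open Set Metric Module Submodule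

namespace Stmt15Aux

/-- Shorthand for euclidean space. -/
abbrev Euc (n : ℕ) : Type := EuclideanSpace ℝ (Fin n)

/-- Local-section property on a set `O`. -/
def SecProp {m d : ℕ} (V : Euc m → Submodule ℝ (Euc d)) (O : Set (Euc m)) : Prop :=
  ∀ x ∈ O, ∀ v₀ ∈ V x, ∃ U : Set (Euc m), IsOpen U ∧ x ∈ U ∧ U ⊆ O ∧
    ∃ v : Euc m → Euc d, ContinuousOn v U ∧ v x = v₀ ∧ ∀ y ∈ U, v y ∈ V y

/-- Linear independence of a continuous family of vectors is an open condition. -/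
lemma indep_open {m d n : ℕ} {U : Set (Euc m)} (hU : IsOpen U) (g : Fin n → Euc m → Euc d)
    (hg : ∀ i, ContinuousOn (g i) U) {x : Euc m} (hx : x ∈ U)
    (hind : LinearIndependent ℝ fun i => g i x) :
    ∃ U' : Set (Euc m), IsOpen U' ∧ x ∈ U' ∧ U' ⊆ U ∧
      ∀ y ∈ U', LinearIndependent ℝ fun i => g i y := by
  classical
  set W : Submodule ℝ (Euc d) := Submodule.span ℝ (Set.range fun i => g i x) with hW
  let β : Basis (Fin n) ℝ W := Basis.span hind
  let L : Euc d →ₗ[ℝ] (Fin n → ℝ) :=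
    β.equivFun.toLinearMap ∘ₗ (orthogonalProjection W).toLinearMap
  have hLcont : Continuous L := LinearMap.continuous_of_finiteDimensional L
  have hLg : ∀ i j, L (g j x) i = if i = j then 1 else 0 := by
    intro i j
    have h1 : orthogonalProjection W (g j x) = β j := by
      have h2 : ((β j : Euc d)) = g j x := congrArg Subtype.val (Basis.span_apply hind j)
      rw [← h2]
      exact orthogonalProjection_mem_subspace_eq_self (β j)
    simp only [L, LinearMap.coe_comp, Function.comp_apply, ContinuousLinearMap.coe_coe,
      LinearEquiv.coe_coe, h1]
    rw [Basis.equivFun_self]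
    simp [eq_comm]
  set A : Euc m → Matrix (Fin n) (Fin n) ℝ := fun y => Matrix.of fun i j => L (g j y) i with hA
  have hAcont : ContinuousOn (fun y => (A y).det) U := by
    have h1 : ContinuousOn A U := by
      apply continuousOn_pi.2; intro i
      apply continuousOn_pi.2; intro j
      exact ((continuous_apply i).comp hLcont).comp_continuousOn (hg j)
    exact (continuous_id.matrix_det).comp_continuousOn h1
  refine ⟨U ∩ (fun y => (A y).det) ⁻¹' ({0}ᶜ), hAcont.isOpen_inter_preimage hU
    isOpen_compl_singleton, ⟨hx, ?_⟩, inter_subset_left, ?_⟩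
  · have hAx : A x = 1 := by
      ext i j
      simp [hA, hLg i j, Matrix.one_apply]
    simp [hAx]
  · rintro y ⟨hyU, hdet⟩
    have hdet' : (A y).det ≠ 0 := hdet
    rw [Fintype.linearIndependent_iff]
    intro c hc
    have hL0 : L (∑ i, c i • g i y) = 0 := by rw [hc]; exact map_zero L
    rw [map_sum] at hL0
    simp only [map_smul] at hL0
    have hmv : (A y).mulVec c = 0 := by
      funext i
      have h3 := congrFun hL0 i
      simp only [Finset.sum_apply, Pi.smul_apply, smul_eq_mul, Pi.zero_apply] at h3
      simp only [Matrix.mulVec, dotProduct, hA, Matrix.of_apply, Pi.zero_apply]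
      rw [← h3]
      exact Finset.sum_congr rfl fun j _ => mul_comm _ _
    have hc0 : c = 0 := by
      have h2 := congrArg (fun v => (A y)⁻¹.mulVec v) hmv
      simpa [Matrix.mulVec_mulVec, Matrix.nonsing_inv_mul _ (isUnit_iff_ne_zero.2 hdet'),
        Matrix.one_mulVec, Matrix.mulVec_zero] using h2
    exact fun i => congrFun hc0 i

/-- Continuous local sections forming pointwise independent families, through a basis
of the fibre at a given point. -/
lemma basis_sections {m d : ℕ} {V : Euc m → Submodule ℝ (Euc d)} {O : Set (Euc m)}
    (hO : IsOpen O) (hP : SecProp V O) {x : Euc m} (hx : x ∈ O) :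
    ∃ U, IsOpen U ∧ x ∈ U ∧ U ⊆ O ∧
      ∃ σ : Fin (finrank ℝ (V x)) → Euc m → Euc d,
        (∀ i, ContinuousOn (σ i) U) ∧ (∀ i, ∀ z ∈ U, σ i z ∈ V z) ∧
        ∀ z ∈ U, LinearIndependent ℝ fun i => σ i z := by
  classical
  set r := finrank ℝ (V x) with hr
  let b : Basis (Fin r) ℝ (V x) := finBasis ℝ (V x)
  have H : ∀ i : Fin r, ∃ U : Set (Euc m), IsOpen U ∧ x ∈ U ∧ U ⊆ O ∧
      ∃ v : Euc m → Euc d, ContinuousOn v U ∧ v x = (b i : Euc d) ∧ ∀ y ∈ U, v y ∈ V y :=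
    fun i => hP x hx (b i : Euc d) (b i).2
  choose Ui hUio hxUi hUiO vi hvic hvix hvim using H
  set U₁ : Set (Euc m) := O ∩ ⋂ i, Ui i with hU₁
  have hU₁o : IsOpen U₁ := hO.inter (isOpen_iInter_of_finite hUio)
  have hxU₁ : x ∈ U₁ := ⟨hx, mem_iInter.2 hxUi⟩
  have hU₁sub : ∀ i, U₁ ⊆ Ui i := fun i => fun z hz => mem_iInter.1 hz.2 i
  have hvc : ∀ i, ContinuousOn (vi i) U₁ := fun i => (hvic i).mono (hU₁sub i)
  have hindx : LinearIndependent ℝ fun i => vi i x := by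
    have h1 : (fun i => vi i x) = fun i => ((b i : Euc d)) := funext fun i => hvix i
    rw [h1]
    have := b.linearIndependent.map' (V x).subtype (Submodule.ker_subtype _)
    exact this
  obtain ⟨U, hUo, hxU, hUsub, hind⟩ := indep_open hU₁o (fun i => vi i) hvc hxU₁ hindx
  exact ⟨U, hUo, hxU, fun z hz => (hUsub hz).1, fun i => vi i,
    fun i => (hvc i).mono hUsub, fun i z hz => hvim i z (hU₁sub i (hUsub hz)), hind⟩

/-- Pad a finite family of maps with zeros. -/
def padF {m d : ℕ} {a K : ℕ} (h : a ≤ K) (f : Fin a → Euc m → Euc d) :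
    Fin K → Euc m → Euc d :=
  fun j z => if hj : (j : ℕ) < a then f ⟨j, hj⟩ z else 0

lemma padF_cont {m d : ℕ} {a K : ℕ} (h : a ≤ K) (f : Fin a → Euc m → Euc d)
    {U : Set (Euc m)} (hf : ∀ i, ContinuousOn (f i) U) :
    ∀ j, ContinuousOn (padF h f j) U := by
  intro j
  by_cases hj : (j : ℕ) < a
  · have h1 : padF h f j = f ⟨j, hj⟩ := funext fun z => dif_pos hj
    rw [h1]; exact hf ⟨j, hj⟩
  · have h1 : padF h f j = fun _ => 0 := funext fun z => dif_neg hj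
    rw [h1]; exact continuousOn_const

lemma padF_mem {m d : ℕ} {a K : ℕ} (h : a ≤ K) (f : Fin a → Euc m → Euc d)
    {V : Euc m → Submodule ℝ (Euc d)} {U : Set (Euc m)}
    (hf : ∀ i, ∀ z ∈ U, f i z ∈ V z) :
    ∀ j, ∀ z ∈ U, padF h f j z ∈ V z := by
  intro j z hz
  by_cases hj : (j : ℕ) < a
  · simpa only [padF, dif_pos hj] using hf ⟨j, hj⟩ z hz
  · simp only [padF, dif_neg hj]; exact zero_mem _

lemma padF_span {m d : ℕ} {a K : ℕ} (h : a ≤ K) (f : Fin a → Euc m → Euc d) (z : Euc m) :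
    Submodule.span ℝ (Set.range fun j => padF h f j z)
      = Submodule.span ℝ (Set.range fun i => f i z) := by
  apply le_antisymm
  · rw [Submodule.span_le]
    rintro w ⟨j, rfl⟩
    by_cases hj : (j : ℕ) < a
    · simp only [padF, dif_pos hj]
      exact Submodule.subset_span ⟨_, rfl⟩
    · simp only [padF, dif_neg hj]
      exact zero_mem _
  · rw [Submodule.span_le]
    rintro w ⟨i, rfl⟩
    have h1 : padF h f ⟨(i : ℕ), lt_of_lt_of_le i.2 h⟩ z = f i z := by
      simp [padF]
    exact Submodule.subset_span ⟨⟨(i : ℕ), lt_of_lt_of_le i.2 h⟩, h1⟩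

lemma finrank_le_d {m d : ℕ} (V : Euc m → Submodule ℝ (Euc d)) (z : Euc m) :
    finrank ℝ (V z) ≤ d := by
  have h1 := Submodule.finrank_le (V z)
  rwa [finrank_euclideanSpace_fin] at h1

lemma span_sections_eq {m d : ℕ} {V : Euc m → Submodule ℝ (Euc d)} {n : ℕ}
    {σ : Fin n → Euc m → Euc d} {z : Euc m}
    (hmem : ∀ i, σ i z ∈ V z) (hind : LinearIndependent ℝ fun i => σ i z)
    (hle : finrank ℝ (V z) ≤ n) :
    V z = Submodule.span ℝ (Set.range fun i => σ i z) := by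
  have h1 : Submodule.span ℝ (Set.range fun i => σ i z) ≤ V z := by
    rw [Submodule.span_le]; rintro w ⟨i, rfl⟩; exact hmem i
  have h2 : finrank ℝ (Submodule.span ℝ (Set.range fun i => σ i z)) = n := by
    rw [finrank_span_eq_card hind, Fintype.card_fin]
  exact (Submodule.eq_of_le_of_finrank_le h1 (le_trans hle h2.symm.le)).symm

/-- The key lemma: a family of subspaces with the local-section property on an open set
`O ⊆ ℝ^m` is, near every point whose fibre has codimension at most `s`, spanned pointwise
by finitely many continuous maps. Proof by induction on `s`, using the Besicovitch
covering theorem in the inductive step. -/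
lemma key (m d s : ℕ) :
    ∃ K : ℕ, ∀ (V : Euc m → Submodule ℝ (Euc d)) (O : Set (Euc m)), IsOpen O → SecProp V O →
      ∀ x ∈ O, d ≤ finrank ℝ (V x) + s →
      ∃ U, IsOpen U ∧ x ∈ U ∧ U ⊆ O ∧
        ∃ f : Fin K → Euc m → Euc d, (∀ j, ContinuousOn (f j) U) ∧
          ∀ z ∈ U, V z = Submodule.span ℝ (Set.range fun j => f j z) := by
  classical
  obtain ⟨Nb, τ, hτ, hN⟩ := HasBesicovitchCovering.no_satelliteConfig (α := Euc m)
  induction s with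
  | zero =>
    refine ⟨d, fun V O hO hP x hx hr => ?_⟩
    obtain ⟨U, hUo, hxU, hUO, σ, hσc, hσm, hσi⟩ := basis_sections hO hP hx
    have hrd : finrank ℝ (V x) ≤ d := finrank_le_d V x
    refine ⟨U, hUo, hxU, hUO, padF hrd σ, padF_cont hrd σ hσc, fun z hz => ?_⟩
    rw [padF_span hrd σ z]
    exact span_sections_eq (fun i => hσm i z hz) (hσi z hz)
      (le_trans (finrank_le_d V z) (by omega))
  | succ s IH =>
    obtain ⟨K, hK⟩ := IH
    refine ⟨d + Nb * K, fun V O hO hP x hx hr => ?_⟩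
    obtain ⟨U₁, hU₁o, hxU₁, hU₁O, σ, hσc, hσm, hσi⟩ := basis_sections hO hP hx
    have hrd : finrank ℝ (V x) ≤ d := finrank_le_d V x
    set B : Set (Euc m) := {z | z ∈ U₁ ∧ finrank ℝ (V x) < finrank ℝ (V z)} with hBdef
    -- choose, for every point of `B`, a finite spanning family near it (inductive
    -- hypothesis), a small closed ball and bounds for the family on this ball.
    have HY : ∀ y : Euc m, ∃ (Uy : Set (Euc m)) (fy : Fin K → Euc m → Euc d)
        (ρy Cy : ℝ), y ∈ B →
        (IsOpen Uy ∧ closedBall y ρy ⊆ Uy ∧ 0 < ρy ∧ ρy ≤ 1 ∧ 1 ≤ Cy ∧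
          (∀ j, ContinuousOn (fy j) Uy) ∧
          (∀ z ∈ Uy, V z = Submodule.span ℝ (Set.range fun j => fy j z)) ∧
          (∀ z ∈ closedBall y ρy, ∀ j, ‖fy j z‖ ≤ Cy)) := by
      intro y
      by_cases hy : y ∈ B
      · obtain ⟨U', hU'o, hyU', hU'O, f, hfc, hfspan⟩ :=
          hK V O hO hP y (hU₁O hy.1) (by have := hy.2; omega)
        set Cy := 1 + ∑ j : Fin K, ‖f j y‖ with hCydef
        have hCy : 1 ≤ Cy :=
          le_add_of_nonneg_right (Finset.sum_nonneg fun _ _ => norm_nonneg _)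
        have hfb : ∀ j : Fin K, ‖f j y‖ < Cy := by
          intro j
          have h1 : ‖f j y‖ ≤ ∑ j', ‖f j' y‖ :=
            Finset.single_le_sum (fun j' _ => norm_nonneg (f j' y)) (Finset.mem_univ j)
          rw [hCydef]; linarith
        have hev : ∀ᶠ z in nhds y, z ∈ U' ∧ ∀ j, ‖f j z‖ ≤ Cy := by
          have h1 : ∀ᶠ z in nhds y, z ∈ U' := hU'o.mem_nhds hyU'
          have h2 : ∀ j : Fin K, ∀ᶠ z in nhds y, ‖f j z‖ ≤ Cy := fun j =>
            (Filter.Tendsto.eventually_lt_const (hfb j)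
              ((hfc j).continuousAt (hU'o.mem_nhds hyU')).norm).mono fun z hz => hz.le
          exact h1.and (Filter.eventually_all.2 h2)
        obtain ⟨ε, hε, hεball⟩ := Metric.nhds_basis_closedBall.eventually_iff.1 hev
        refine ⟨U', f, min ε 1, Cy, fun _ => ⟨hU'o, ?_, lt_min hε one_pos,
          min_le_right _ _, hCy, hfc, hfspan, ?_⟩⟩
        · intro z hz
          exact (hεball (closedBall_subset_closedBall (min_le_left ε 1) hz)).1
        · intro z hz j
          exact (hεball (closedBall_subset_closedBall (min_le_left ε 1) hz)).2 j
      · exact ⟨∅, fun _ _ => 0, 1, 1, fun h => absurd h hy⟩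
    choose Uy fy ρ C hY using HY
    -- Besicovitch covering of `B` by these balls, in `Nb` disjoint families
    let q : Besicovitch.BallPackage (↥B) (Euc m) :=
      { c := fun y => (y : Euc m)
        r := fun y => ρ (y : Euc m)
        rpos := fun y => (hY (y : Euc m) y.2).2.2.1
        r_bound := 1
        r_le := fun y => (hY (y : Euc m) y.2).2.2.2.1 }
    obtain ⟨Fam, hdisj, hcov⟩ := Besicovitch.exist_disjoint_covering_families hτ hN q
    have hcov' : ∀ z ∈ B, ∃ i : Fin Nb, ∃ y : ↥B, y ∈ Fam i ∧
        z ∈ ball (y : Euc m) (ρ (y : Euc m)) := by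
      intro z hz
      have h1 : z ∈ range q.c := ⟨⟨z, hz⟩, rfl⟩
      have h2 := hcov h1
      simp only [mem_iUnion, exists_prop] at h2
      obtain ⟨i, y, hyF, hzball⟩ := h2
      exact ⟨i, y, hyF, hzball⟩
    -- the scaling factor for the family at `y`
    set co : Euc m → ℝ := fun y => ρ y / C y with hco
    have hco_pos : ∀ y : ↥B, 0 < co (y : Euc m) := fun y =>
      div_pos (hY (y : Euc m) y.2).2.2.1
        (lt_of_lt_of_le one_pos (hY (y : Euc m) y.2).2.2.2.2.1)
    -- the glued sections
    set g : Fin Nb → Fin K → Euc m → Euc d := fun i j z =>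
      if h : ∃ y : ↥B, y ∈ Fam i ∧ z ∈ closedBall (y : Euc m) (ρ (y : Euc m)) then
        ((1 - dist z (h.choose : Euc m) / ρ (h.choose : Euc m)) * co (h.choose : Euc m)) •
          fy (h.choose : Euc m) j z
      else 0 with hgdef
    -- characterization of `g` on each ball
    have gchar : ∀ (i : Fin Nb) (y₀ : ↥B), y₀ ∈ Fam i →
        ∀ z ∈ closedBall (y₀ : Euc m) (ρ (y₀ : Euc m)), ∀ j,
        g i j z = ((1 - dist z (y₀ : Euc m) / ρ (y₀ : Euc m)) * co (y₀ : Euc m)) •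
          fy (y₀ : Euc m) j z := by
      intro i y₀ hy₀ z hz j
      have hex : ∃ y : ↥B, y ∈ Fam i ∧ z ∈ closedBall (y : Euc m) (ρ (y : Euc m)) :=
        ⟨y₀, hy₀, hz⟩
      have hchoose : hex.choose = y₀ := by
        by_contra hne
        have hd := hdisj i hex.choose_spec.1 hy₀ hne
        exact Set.disjoint_left.1 hd hex.choose_spec.2 hz
      rw [hgdef]
      simp only [dif_pos hex]
      rw [hchoose]
    -- norm bound for `g`
    have gbound : ∀ (i : Fin Nb) (j : Fin K) (z : Euc m), g i j z = 0 ∨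
        ∃ y : ↥B, y ∈ Fam i ∧ z ∈ closedBall (y : Euc m) (ρ (y : Euc m)) ∧
          ‖g i j z‖ ≤ ρ (y : Euc m) - dist z (y : Euc m) := by
      intro i j z
      by_cases h : ∃ y : ↥B, y ∈ Fam i ∧ z ∈ closedBall (y : Euc m) (ρ (y : Euc m))
      · right
        obtain ⟨y, hyF, hzb⟩ := h
        refine ⟨y, hyF, hzb, ?_⟩
        rw [gchar i y hyF z hzb j]
        obtain ⟨-, hball, hρpos, -, hC1, -, -, hbound⟩ := hY (y : Euc m) y.2
        have hdist : dist z (y : Euc m) ≤ ρ (y : Euc m) := mem_closedBall.1 hzb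
        have ht0 : 0 ≤ 1 - dist z (y : Euc m) / ρ (y : Euc m) := by
          rw [sub_nonneg]
          exact div_le_one_of_le₀ hdist hρpos.le
        have hC0 : (0:ℝ) < C (y : Euc m) := lt_of_lt_of_le one_pos hC1
        have hco0 : 0 ≤ co (y : Euc m) := (hco_pos y).le
        have hfb : ‖fy (y : Euc m) j z‖ ≤ C (y : Euc m) := hbound z hzb j
        rw [norm_smul, Real.norm_eq_abs, abs_of_nonneg (mul_nonneg ht0 hco0)]
        calc (1 - dist z (y:Euc m) / ρ (y:Euc m)) * co (y:Euc m) * ‖fy (y:Euc m) j z‖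
            ≤ (1 - dist z (y:Euc m) / ρ (y:Euc m)) * co (y:Euc m) * C (y:Euc m) :=
              mul_le_mul_of_nonneg_left hfb (mul_nonneg ht0 hco0)
          _ = (1 - dist z (y:Euc m) / ρ (y:Euc m)) * ρ (y:Euc m) := by
              rw [hco, mul_assoc, div_mul_cancel₀ _ hC0.ne']
          _ = ρ (y:Euc m) - dist z (y:Euc m) := by
              rw [sub_mul, one_mul, div_mul_cancel₀ _ hρpos.ne']
      · left
        rw [hgdef]
        simp only [dif_neg h]
    -- the values of `g` lie in the fibres
    have gmem : ∀ (i : Fin Nb) (j : Fin K) (z : Euc m), g i j z ∈ V z := by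
      intro i j z
      by_cases h : ∃ y : ↥B, y ∈ Fam i ∧ z ∈ closedBall (y : Euc m) (ρ (y : Euc m)) 
      · obtain ⟨y, hyF, hzb⟩ := h
        rw [gchar i y hyF z hzb j]
        obtain ⟨-, hball, -, -, -, -, hspan, -⟩ := hY (y : Euc m) y.2
        refine Submodule.smul_mem _ _ ?_
        rw [hspan z (hball hzb)]
        exact Submodule.subset_span ⟨j, rfl⟩
      · rw [hgdef]; simp only [dif_neg h]; exact zero_mem _
    -- continuity of `g`
    have gcont : ∀ (i : Fin Nb) (j : Fin K), Continuous (g i j) := by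
      intro i j
      rw [continuous_iff_continuousAt]
      intro z₀
      by_cases h₀ : ∃ y : ↥B, y ∈ Fam i ∧ z₀ ∈ ball (y : Euc m) (ρ (y : Euc m))
      · obtain ⟨y, hyF, hy⟩ := h₀
        obtain ⟨hUo, hball, hρpos, -, -, hcont, -, -⟩ := hY (y : Euc m) y.2
        have hmem : Uy (y : Euc m) ∈ nhds z₀ :=
          hUo.mem_nhds (hball (ball_subset_closedBall hy))
        have hca : ContinuousAt
            (fun z => ((1 - dist z (y : Euc m) / ρ (y : Euc m)) * co (y : Euc m)) •
              fy (y : Euc m) j z) z₀ := by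
          apply ContinuousAt.fun_smul
          · exact (((continuous_const.sub ((continuous_id.dist continuous_const).div_const
              _)).mul continuous_const)).continuousAt
          · exact (hcont j).continuousAt hmem
        apply hca.congr
        have hball_nhds : ball (y : Euc m) (ρ (y : Euc m)) ∈ nhds z₀ :=
          isOpen_ball.mem_nhds hy
        filter_upwards [hball_nhds] with z hz
        exact (gchar i y hyF z (ball_subset_closedBall hz) j).symm
      · have hb : ∀ z, ‖g i j z‖ ≤ dist z z₀ := by
          intro z
          rcases gbound i j z with h | ⟨y, hyF, hzb, hle⟩
          · rw [h, norm_zero]; exact dist_nonneg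
          · have h1 : ρ (y : Euc m) ≤ dist z₀ (y : Euc m) := by
              by_contra hlt
              push_neg at hlt
              exact h₀ ⟨y, hyF, mem_ball.2 hlt⟩
            have h2 : dist z₀ (y : Euc m) ≤ dist z₀ z + dist z (y : Euc m) :=
              dist_triangle _ _ _
            rw [dist_comm z₀ z] at h2
            linarith
        have hz₀ : g i j z₀ = 0 := by
          have h1 := hb z₀
          rw [dist_self] at h1
          exact norm_le_zero_iff.1 h1
        rw [ContinuousAt, hz₀]
        apply squeeze_zero_norm hb
        have : Filter.Tendsto (fun z => dist z z₀) (nhds z₀) (nhds (dist z₀ z₀)) :=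
          ((continuous_id.dist continuous_const)).continuousAt
        rwa [dist_self] at this
    -- assemble the final family
    set h2 : Fin (Nb * K) → Euc m → Euc d :=
      fun a => g (finProdFinEquiv.symm a).1 (finProdFinEquiv.symm a).2 with hh2
    set f : Fin (d + Nb * K) → Euc m → Euc d :=
      fun a => Sum.elim (padF hrd σ) h2 (finSumFinEquiv.symm a) with hf
    refine ⟨U₁, hU₁o, hxU₁, hU₁O, f, ?_, ?_⟩
    · intro a
      rw [hf]
      rcases hsum : finSumFinEquiv.symm a with b | c
      · simp only [hsum, Sum.elim_inl]
        exact padF_cont hrd σ hσc b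
      · simp only [hsum, Sum.elim_inr]
        exact (gcont _ _).continuousOn
    · intro z hz
      refine le_antisymm ?_ ?_
      · by_cases hzB : z ∈ B
        · obtain ⟨i, y, hyF, hball⟩ := hcov' z hzB
          obtain ⟨-, hballU, hρpos, -, -, -, hspan, -⟩ := hY (y : Euc m) y.2
          set t := (1 - dist z (y : Euc m) / ρ (y : Euc m)) * co (y : Euc m) with htdef
          have ht : 0 < t := by
            apply mul_pos _ (hco_pos y)
            rw [sub_pos]
            exact (div_lt_one hρpos).2 (mem_ball.1 hball)
          rw [hspan z (hballU (ball_subset_closedBall hball)), Submodule.span_le]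
          rintro w ⟨j, rfl⟩
          beta_reduce
          have heq : fy (y : Euc m) j z = t⁻¹ • g i j z := by
            rw [gchar i y hyF z (ball_subset_closedBall hball) j, ← htdef, smul_smul,
              inv_mul_cancel₀ ht.ne', one_smul]
          rw [heq]
          have hmem : g i j z ∈ Submodule.span ℝ (Set.range fun a => f a z) := by
            refine Submodule.subset_span
              ⟨finSumFinEquiv (Sum.inr (finProdFinEquiv (i, j))), ?_⟩
            show f (finSumFinEquiv (Sum.inr (finProdFinEquiv (i, j)))) z = g i j z
            simp only [hf, Equiv.symm_apply_apply, Sum.elim_inr, hh2]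
          exact Submodule.smul_mem _ _ hmem
        · have hz' : finrank ℝ (V z) ≤ finrank ℝ (V x) := by
            by_contra hlt
            push_neg at hlt
            exact hzB ⟨hz, hlt⟩
          rw [span_sections_eq (fun i => hσm i z hz) (hσi z hz) hz', Submodule.span_le]
          rintro w ⟨i, rfl⟩
          beta_reduce
          refine Submodule.subset_span ⟨finSumFinEquiv (Sum.inl (Fin.castLE hrd i)), ?_⟩
          show f (finSumFinEquiv (Sum.inl (Fin.castLE hrd i))) z = σ i z
          simp only [hf, Equiv.symm_apply_apply, Sum.elim_inl, padF]
          rw [dif_pos (by simpa using i.2 :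
            ((Fin.castLE hrd i : Fin d) : ℕ) < finrank ℝ (V x))]
          exact congrFun (congrArg σ (Fin.ext rfl)) z
      · rw [Submodule.span_le]
        rintro w ⟨a, rfl⟩
        beta_reduce
        have hfz : f a z = Sum.elim (padF hrd σ) h2 (finSumFinEquiv.symm a) z := by
          rw [hf]
        rw [hfz]
        rcases finSumFinEquiv.symm a with b | c
        · simp only [Sum.elim_inl]
          exact padF_mem hrd σ (fun i z' hz' => hσm i z' hz') b z hz
        · simp only [Sum.elim_inr]
          exact gmem _ _ z

end Stmt15Aux

/-- A family of linear subspaces `V x ≤ ℝ^d`, indexed by a topological space `M`, is a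
*continuous distribution* if every vector of every fibre extends to a continuous local
section of the family. This is condition i) of Theorem 3.3. -/
def ContinuousDistribution {M : Type*} [TopologicalSpace M] {d : ℕ}
    (V : M → Submodule ℝ (EuclideanSpace ℝ (Fin d))) : Prop :=
  ∀ x₀ : M, ∀ v₀ ∈ V x₀, ∃ U : Set M, IsOpen U ∧ x₀ ∈ U ∧
    ∃ v : M → EuclideanSpace ℝ (Fin d),
      ContinuousOn v U ∧ v x₀ = v₀ ∧ ∀ x ∈ U, v x ∈ V x

/-- (equivalence i) ⟺ iii) of Theorem 3.3): a family of subspaces of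
`ℝ^d` over a smooth manifold `M` is a continuous distribution if and only if it is locally
the range of a continuous morphism `A : U → L(ℝ^k, ℝ^d)` from a trivial bundle of finite
rank (the space of linear maps carrying the operator norm topology). -/
theorem stmt_15 (m d : ℕ) (hd : 1 ≤ d) (M : Type*) [TopologicalSpace M] [T2Space M]
    [SecondCountableTopology M] [ChartedSpace (EuclideanSpace ℝ (Fin m)) M]
    [IsManifold (𝓡 m) (⊤ : ℕ∞) M]
    (V : M → Submodule ℝ (EuclideanSpace ℝ (Fin d))) :
    ContinuousDistribution V ↔
      ∀ x₀ : M, ∃ (U : Set M) (k : ℕ)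
        (A : M → EuclideanSpace ℝ (Fin k) →L[ℝ] EuclideanSpace ℝ (Fin d)),
        IsOpen U ∧ x₀ ∈ U ∧ ContinuousOn A U ∧
        ∀ x ∈ U, ∀ w : EuclideanSpace ℝ (Fin d),
          w ∈ V x ↔ ∃ u : EuclideanSpace ℝ (Fin k), A x u = w := by
  classical
  constructor
  · -- i) ⟹ iii)
    intro hV x₀
    set e := chartAt (EuclideanSpace ℝ (Fin m)) x₀ with he
    set V' : Stmt15Aux.Euc m → Submodule ℝ (Stmt15Aux.Euc d) := fun z => V (e.symm z)
      with hV'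
    have hSec : Stmt15Aux.SecProp V' e.target := by
      intro z hz v₀ hv₀
      obtain ⟨U, hUo, hxU, v, hvc, hvx, hvm⟩ := hV (e.symm z) v₀ hv₀
      refine ⟨e.target ∩ e.symm ⁻¹' (U ∩ e.source),
        e.isOpen_inter_preimage_symm (hUo.inter e.open_source),
        ⟨hz, ⟨hxU, e.map_target hz⟩⟩, Set.inter_subset_left, v ∘ e.symm, ?_, hvx, ?_⟩
      · exact hvc.comp (e.continuousOn_symm.mono Set.inter_subset_left)
          (fun w hw => hw.2.1)
      · intro y hy
        exact hvm (e.symm y) hy.2.1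
    obtain ⟨K, hK⟩ := Stmt15Aux.key m d d
    obtain ⟨U', hU'o, hxU', hU'sub, f, hfc, hfspan⟩ :=
      hK V' e.target e.open_target hSec (e x₀) (e.map_source (mem_chart_source _ x₀))
        (Nat.le_add_left d _)
    refine ⟨e.source ∩ e ⁻¹' U', K,
      fun x => ∑ j : Fin K, (EuclideanSpace.proj j).smulRight (f j (e x)),
      e.isOpen_inter_preimage hU'o, ⟨mem_chart_source _ x₀, hxU'⟩, ?_, ?_⟩
    · apply continuousOn_finset_sum
      intro j _
      have h1 : ContinuousOn (fun x => f j (e x)) (e.source ∩ e ⁻¹' U') :=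
        (hfc j).comp (e.continuousOn.mono Set.inter_subset_left) (fun w hw => hw.2)
      exact ((ContinuousLinearMap.smulRightL ℝ (EuclideanSpace ℝ (Fin K))
        (EuclideanSpace ℝ (Fin d)) (EuclideanSpace.proj j)).continuous).comp_continuousOn h1
    · intro x hx w
      have hx' : e x ∈ U' := hx.2
      have hVx : V x = V' (e x) := (congrArg V (e.left_inv hx.1)).symm
      rw [hVx, hfspan (e x) hx', mem_span_range_iff_exists_fun ℝ]
      constructor
      · rintro ⟨c, hc⟩
        refine ⟨(WithLp.equiv 2 (Fin K → ℝ)).symm c, ?_⟩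
        rw [ContinuousLinearMap.sum_apply]
        rw [← hc]
        refine Finset.sum_congr rfl fun j _ => ?_
        rw [ContinuousLinearMap.smulRight_apply]
        congr 1
      · rintro ⟨u, hu⟩
        refine ⟨fun j => u j, ?_⟩
        rw [← hu, ContinuousLinearMap.sum_apply]
        refine Finset.sum_congr rfl fun j _ => ?_
        rw [ContinuousLinearMap.smulRight_apply]
        congr 1
  · -- iii) ⟹ i)
    intro hA x₀ v₀ hv₀
    obtain ⟨U, k, A, hUo, hxU, hAc, hAr⟩ := hA x₀
    obtain ⟨u₀, hu₀⟩ := (hAr x₀ hxU v₀).1 hv₀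
    refine ⟨U, hUo, hxU, fun x => A x u₀, ?_, hu₀, ?_⟩
    · exact ((ContinuousLinearMap.apply ℝ (EuclideanSpace ℝ (Fin d)) u₀).continuous
        ).comp_continuousOn hAc
    · intro x hx
      exact (hAr x hx (A x u₀)).2 ⟨u₀, rfl⟩
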